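/- The number of functions f : Fin n → Fin n with exactly one cyclic point (i.e. exactly one x with f^[k] x = x for some k ≥ 1) equals n^(n-1), for n ≥ 1. -/

import Mathlib

open Function Finset

namespace Stmt0

variable {n : ℕ}


variable {n : ℕ}

/-- Some iterate of any point is periodic (finite type). -/
lemma exists_iter_mem_periodicPts (f : Fin n → Fin n) (x : Fin n) :
    ∃ N, f^[N] x ∈ periodicPts f := by
  obtain ⟨i, j, hne, hij⟩ := Finite.exists_ne_map_eq_of_infinite (fun k : ℕ => f^[k] x)
  wlog hlt : i < j generalizing i j
  · exact this j i hne.symm hij.symm (by omega)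
  refine ⟨i, (j - i), by omega, ?_⟩
  show f^[j-i] (f^[i] x) = f^[i] x
  rw [← Function.iterate_add_apply]
  rw [show j - i + i = j by omega]
  exact hij.symm

lemma unique_periodic (f : Fin n → Fin n) (r : Fin n) (hr : f r = r)
    (hreach : ∀ x, ∃ N, f^[N] x = r) :
    ∃! x : Fin n, ∃ k : ℕ, 1 ≤ k ∧ f^[k] x = x := by
  refine ⟨r, ⟨1, le_refl 1, by simpa using hr⟩, ?_⟩
  rintro x ⟨k, hk1, hk⟩
  obtain ⟨N, hN⟩ := hreach x
  have hper : IsPeriodicPt f (k * N) x := IsPeriodicPt.mul_const hk N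
  have h1 : k * N = (k * N - N) + N := by
    have : N ≤ k * N := Nat.le_mul_of_pos_left N (by omega)
    omega
  have : f^[(k * N - N) + N] x = x := h1 ▸ hper
  rw [Function.iterate_add_apply, hN, Function.iterate_fixed hr] at this
  exact this.symm

/-- every point eventually reaches the unique periodic point -/
lemma reach_of_unique (f : Fin n → Fin n)
    (hf : ∃! x : Fin n, ∃ k : ℕ, 1 ≤ k ∧ f^[k] x = x) (r : Fin n)
    (hr : ∃ k : ℕ, 1 ≤ k ∧ f^[k] r = r) (x : Fin n) : ∃ N, f^[N] x = r := by
  obtain ⟨N, hN⟩ := exists_iter_mem_periodicPts f x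
  obtain ⟨k, hk, hper⟩ := Function.mem_periodicPts.mp hN
  exact ⟨N, (hf.unique ⟨k, hk, hper⟩ hr)⟩

/-- the unique periodic point is a fixed point -/
lemma root_fixed (f : Fin n → Fin n)
    (hf : ∃! x : Fin n, ∃ k : ℕ, 1 ≤ k ∧ f^[k] x = x) (r : Fin n)
    (hr : ∃ k : ℕ, 1 ≤ k ∧ f^[k] r = r) : f r = r := by
  obtain ⟨k, hk, hper⟩ := hr
  have : ∃ k : ℕ, 1 ≤ k ∧ f^[k] (f r) = f r := by
    refine ⟨k, hk, ?_⟩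
    calc f^[k] (f r) = f (f^[k] r) := by
          rw [← Function.iterate_succ_apply, Function.iterate_succ_apply']
      _ = f r := by rw [hper]
  exact hf.unique this ⟨k, hk, hper⟩


def P (f : Fin n → Fin n) : Prop := ∃! x : Fin n, ∃ k : ℕ, 1 ≤ k ∧ f^[k] x = x

variable {n : ℕ}

open scoped Classical in
noncomputable def C (g : Fin n → Fin n) : Finset (Fin n) :=
  univ.filter (· ∈ periodicPts g)

lemma mem_C {g : Fin n → Fin n} {x : Fin n} : x ∈ C g ↔ x ∈ periodicPts g := by
  simp [C]

lemma C_nonempty (hn : 1 ≤ n) (g : Fin n → Fin n) : (C g).Nonempty := by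
  obtain ⟨N, hN⟩ := exists_iter_mem_periodicPts g ⟨0, hn⟩
  exact ⟨_, mem_C.mpr hN⟩

lemma g_mapsTo (g : Fin n → Fin n) {x : Fin n} (hx : x ∈ C g) : g x ∈ C g :=
  mem_C.mpr ((Function.bijOn_periodicPts g).mapsTo (mem_C.mp hx))

noncomputable def gC (g : Fin n → Fin n) : {x // x ∈ C g} → {x // x ∈ C g} :=
  fun x => ⟨g x.1, g_mapsTo g x.2⟩

lemma gC_bij (g : Fin n → Fin n) : Function.Bijective (gC g) := by
  rw [← Finite.injective_iff_bijective]
  intro a b hab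
  have := (Function.bijOn_periodicPts g).injOn
  exact Subtype.ext (this (mem_C.mp a.2) (mem_C.mp b.2) (congrArg Subtype.val hab))

noncomputable def τ (g : Fin n → Fin n) : Fin (C g).card ≃ {x // x ∈ C g} :=
  ((C g).orderIsoOfFin rfl).toEquiv.trans (Equiv.ofBijective (gC g) (gC_bij g))

lemma τ_def (g : Fin n → Fin n) (i : Fin (C g).card) :
    (τ g i).1 = g (((C g).orderIsoOfFin rfl i : Fin n)) := rfl

lemma τ_congr (g : Fin n → Fin n) (a b : ℕ) (ha : a < (C g).card)
    (hb : b < (C g).card) (h : a = b) : (τ g ⟨a, ha⟩).1 = (τ g ⟨b, hb⟩).1 := by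
  subst h; rfl

noncomputable def phiF (g : Fin n → Fin n) : Fin n → Fin n := fun x =>
  if h : x ∈ C g then
    if hi : ((τ g).symm ⟨x, h⟩ : ℕ) + 1 < (C g).card then
      (τ g ⟨((τ g).symm ⟨x, h⟩ : ℕ) + 1, hi⟩).1
    else x
  else g x

lemma phiF_not_mem (g : Fin n → Fin n) {x : Fin n} (hx : x ∉ C g) :
    phiF g x = g x := dif_neg hx

lemma phiF_τ (g : Fin n → Fin n) (i : Fin (C g).card) :
    phiF g (τ g i).1 =
      if hi : (i : ℕ) + 1 < (C g).card then (τ g ⟨(i : ℕ) + 1, hi⟩).1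
      else (τ g i).1 := by
  have h : (τ g i).1 ∈ C g := (τ g i).2
  have hsymm : (τ g).symm ⟨(τ g i).1, h⟩ = i := by
    rw [show (⟨(τ g i).1, h⟩ : {x // x ∈ C g}) = τ g i from rfl]
    exact (τ g).symm_apply_apply i
  rw [phiF, dif_pos h]
  simp only [hsymm]

lemma iter_phiF_τ (g : Fin n → Fin n) (j : ℕ) :
    ∀ (i : ℕ) (hij : i + j < (C g).card),
    (phiF g)^[j] (τ g ⟨i, by omega⟩).1 = (τ g ⟨i + j, hij⟩).1 := by
  induction j with
  | zero => intro i hij; simp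
  | succ j ih =>
    intro i hij
    rw [Function.iterate_succ_apply, phiF_τ, dif_pos (show (i:ℕ)+1 < (C g).card by omega)]
    rw [ih (i+1) (by omega)]
    exact τ_congr g _ _ _ _ (by omega)

noncomputable def rt (g : Fin n → Fin n) (hK : 0 < (C g).card) : Fin n :=
  (τ g ⟨(C g).card - 1, by omega⟩).1

lemma phiF_rt (g : Fin n → Fin n) (hK : 0 < (C g).card) :
    phiF g (rt g hK) = rt g hK := by
  rw [rt, phiF_τ, dif_neg (by simp only [Fin.val_mk]; omega)]

lemma reach_C (g : Fin n → Fin n) (hK : 0 < (C g).card) {x : Fin n} (hx : x ∈ C g) :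
    ∃ N, (phiF g)^[N] x = rt g hK := by
  set i := (τ g).symm ⟨x, hx⟩ with hi
  have hx' : x = (τ g ⟨(i : ℕ), i.2⟩).1 := by
    rw [show (⟨(i:ℕ), i.2⟩ : Fin (C g).card) = i from rfl, hi]
    exact (congrArg Subtype.val ((τ g).apply_symm_apply ⟨x, hx⟩)).symm
  refine ⟨(C g).card - 1 - (i : ℕ), ?_⟩
  rw [hx', iter_phiF_τ g _ (i : ℕ) (by omega)]
  exact τ_congr g _ _ _ _ (by omega)

lemma escape_C (g : Fin n → Fin n) (N : ℕ) :
    ∀ x, g^[N] x ∈ C g → ∃ M, (phiF g)^[M] x ∈ C g := by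
  induction N with
  | zero => intro x hx; exact ⟨0, hx⟩
  | succ N ih =>
    intro x hx
    by_cases h : x ∈ C g
    · exact ⟨0, h⟩
    · have : g^[N] (g x) ∈ C g := by
        rwa [← Function.iterate_succ_apply]
      obtain ⟨M, hM⟩ := ih (g x) this
      exact ⟨M + 1, by rwa [Function.iterate_add_apply, Function.iterate_one, phiF_not_mem g h]⟩

lemma phiF_P (g : Fin n → Fin n) (hK : 0 < (C g).card) :
    ∃! x : Fin n, ∃ k : ℕ, 1 ≤ k ∧ (phiF g)^[k] x = x := by
  apply unique_periodic (phiF g) (rt g hK) (phiF_rt g hK)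
  intro x
  obtain ⟨N, hN⟩ := exists_iter_mem_periodicPts g x
  obtain ⟨M, hM⟩ := escape_C g N x (mem_C.mpr hN)
  obtain ⟨L, hL⟩ := reach_C g hK hM
  exact ⟨L + M, by rwa [Function.iterate_add_apply]⟩



lemma phiF_rt' (g : Fin n → Fin n) (hK : 0 < (C g).card) :
    phiF g ((τ g ⟨(C g).card - 1, by omega⟩).1) = (τ g ⟨(C g).card - 1, by omega⟩).1 :=
  phiF_rt g hK

noncomputable def yg (g : Fin n → Fin n) (hK : 0 < (C g).card) : Fin n :=
  (τ g ⟨0, hK⟩).1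

lemma path (g : Fin n → Fin n) (hK : 0 < (C g).card) (i : ℕ) (hi : i < (C g).card) :
    (phiF g)^[i] (yg g hK) = (τ g ⟨i, hi⟩).1 := by
  rw [yg, iter_phiF_τ g i 0 (by omega)]
  exact τ_congr g _ _ _ _ (by omega)

lemma τ_val_inj (g : Fin n → Fin n) {a b : Fin (C g).card}
    (h : (τ g a).1 = (τ g b).1) : a = b :=
  (τ g).injective (Subtype.ext h)

lemma stab_lt (g : Fin n → Fin n) (hK : 0 < (C g).card) {i : ℕ}
    (hi : i + 1 < (C g).card) :
    (phiF g)^[i+1] (yg g hK) ≠ (phiF g)^[i] (yg g hK) := by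
  rw [path g hK (i+1) hi, path g hK i (by omega)]
  intro h
  have := τ_val_inj g h
  simp only [Fin.mk.injEq] at this
  omega

lemma stab_eq (g : Fin n → Fin n) (hK : 0 < (C g).card) :
    (phiF g)^[(C g).card - 1 + 1] (yg g hK) = (phiF g)^[(C g).card - 1] (yg g hK) := by
  rw [Function.iterate_succ_apply', path g hK ((C g).card - 1) (by omega)]
  exact phiF_rt' g hK

lemma C_eq_image (g : Fin n → Fin n) (hK : 0 < (C g).card) :
    C g = (range (C g).card).image (fun i => (phiF g)^[i] (yg g hK)) := by
  ext x
  simp only [Finset.mem_image, Finset.mem_range]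
  constructor
  · intro hx
    refine ⟨((τ g).symm ⟨x, hx⟩ : ℕ), ((τ g).symm ⟨x, hx⟩).2, ?_⟩
    rw [path g hK _ ((τ g).symm ⟨x, hx⟩).2]
    exact congrArg Subtype.val ((τ g).apply_symm_apply ⟨x, hx⟩)
  · rintro ⟨i, hi, rfl⟩
    rw [path g hK i hi]
    exact (τ g ⟨i, hi⟩).2

lemma card_C_le (g g' : Fin n → Fin n) (hK : 0 < (C g).card) (hK' : 0 < (C g').card)
    (hf : phiF g = phiF g') (hy : yg g hK = yg g' hK') :
    (C g).card ≤ (C g').card := by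
  by_contra hlt
  push_neg at hlt
  have h1 := stab_eq g' hK'
  rw [← hf, ← hy] at h1
  have h2 := stab_lt g hK (i := (C g').card - 1) (by omega)
  rw [show (C g').card - 1 + 1 = (C g').card by omega] at h1 h2
  exact h2 h1

lemma natIdx_congr (s s' : Finset (Fin n)) (h : s = s') (x : Fin n) (hx : x ∈ s)
    (hx' : x ∈ s') :
    ((s.orderIsoOfFin rfl).symm ⟨x, hx⟩ : ℕ) = ((s'.orderIsoOfFin rfl).symm ⟨x, hx'⟩ : ℕ) := by
  subst h; rfl

lemma g_on_C (g : Fin n → Fin n) (hK : 0 < (C g).card) {x : Fin n} (hx : x ∈ C g) :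
    g x = (phiF g)^[(((C g).orderIsoOfFin rfl).symm ⟨x, hx⟩ : ℕ)] (yg g hK) := by
  rw [path g hK _ (Fin.is_lt _), τ_def]
  congr 1
  exact (congrArg Subtype.val (((C g).orderIsoOfFin rfl).apply_symm_apply ⟨x, hx⟩)).symm

lemma phi_inj_core (g g' : Fin n → Fin n) (hK : 0 < (C g).card) (hK' : 0 < (C g').card)
    (hf : phiF g = phiF g') (hy : yg g hK = yg g' hK') : g = g' := by
  have hcard : (C g).card = (C g').card :=
    le_antisymm (card_C_le g g' hK hK' hf hy) (card_C_le g' g hK' hK hf.symm hy.symm)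
  have hC : C g = C g' := by
    rw [C_eq_image g hK, C_eq_image g' hK', hf, hy, hcard]
  funext x
  by_cases hx : x ∈ C g
  · have hx' : x ∈ C g' := hC ▸ hx
    rw [g_on_C g hK hx, g_on_C g' hK' hx', hf, hy,
      natIdx_congr (C g) (C g') hC x hx hx']
  · have hx' : x ∉ C g' := hC ▸ hx
    rw [← phiF_not_mem g hx, ← phiF_not_mem g' hx', hf]


section Psi
variable (f : Fin n → Fin n) (hf : P f) (y : Fin n)

noncomputable def rt' : Fin n := hf.choose

lemma rt'_per : ∃ k : ℕ, 1 ≤ k ∧ f^[k] (rt' f hf) = rt' f hf := hf.choose_spec.1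

lemma rt'_fixed : f (rt' f hf) = rt' f hf := root_fixed f hf _ (rt'_per f hf)

lemma rt'_unique {x : Fin n} (hx : ∃ k : ℕ, 1 ≤ k ∧ f^[k] x = x) : x = rt' f hf :=
  hf.choose_spec.2 x hx

open scoped Classical in
noncomputable def Nlen : ℕ := Nat.find (reach_of_unique f hf _ (rt'_per f hf) y)

lemma Nlen_spec : f^[Nlen f hf y] y = rt' f hf := by
  rw [Nlen]; exact Nat.find_spec (reach_of_unique f hf _ (rt'_per f hf) y)

lemma Nlen_min {i : ℕ} (hi : i < Nlen f hf y) : f^[i] y ≠ rt' f hf := by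
  rw [Nlen] at hi
  exact Nat.find_min (reach_of_unique f hf _ (rt'_per f hf) y) hi

/-- the path `y, f y, …, f^[Nlen] y = r` is injective -/
lemma v_inj : ∀ i j : ℕ, i ≤ Nlen f hf y → j ≤ Nlen f hf y →
    f^[i] y = f^[j] y → i = j := by
  have key : ∀ i j : ℕ, i < j → j ≤ Nlen f hf y → f^[i] y = f^[j] y → False := by
    intro i j hij hj h
    have hper : ∃ k : ℕ, 1 ≤ k ∧ f^[k] (f^[i] y) = f^[i] y := by
      refine ⟨j - i, by omega, ?_⟩
      rw [← Function.iterate_add_apply, show j - i + i = j by omega]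
      exact h.symm
    have := rt'_unique f hf hper
    exact Nlen_min f hf y (show i < Nlen f hf y by omega) this
  intro i j hi hj h
  rcases lt_trichotomy i j with hc | hc | hc
  · exact absurd h (fun h => key i j hc hj h)
  · exact hc
  · exact absurd h.symm (fun h => key j i hc hi h)

noncomputable def V : Finset (Fin n) :=
  (range (Nlen f hf y + 1)).image (fun i => f^[i] y)

lemma V_card : (V f hf y).card = Nlen f hf y + 1 := by
  rw [V, Finset.card_image_of_injOn, Finset.card_range]
  intro i hi j hj h
  simp only [Finset.coe_range, Set.mem_Iio] at hi hj
  exact v_inj f hf y i j (by omega) (by omega) h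

lemma mem_V {x : Fin n} : x ∈ V f hf y ↔ ∃ i ≤ Nlen f hf y, f^[i] y = x := by
  simp only [V, Finset.mem_image, Finset.mem_range]
  constructor
  · rintro ⟨i, hi, rfl⟩; exact ⟨i, by omega, rfl⟩
  · rintro ⟨i, hi, rfl⟩; exact ⟨i, by omega, rfl⟩

lemma rt'_mem_V : rt' f hf ∈ V f hf y :=
  (mem_V f hf y).mpr ⟨Nlen f hf y, le_refl _, Nlen_spec f hf y⟩

noncomputable def dI : Fin (Nlen f hf y + 1) ≃o {x // x ∈ V f hf y} :=
  (V f hf y).orderIsoOfFin (V_card f hf y)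

noncomputable def psiF : Fin n → Fin n := fun x =>
  if h : x ∈ V f hf y then f^[((dI f hf y).symm ⟨x, h⟩ : ℕ)] y else f x

lemma psiF_not_mem {x : Fin n} (hx : x ∉ V f hf y) : psiF f hf y x = f x := dif_neg hx

lemma psiF_d (j : Fin (Nlen f hf y + 1)) :
    psiF f hf y (dI f hf y j).1 = f^[(j : ℕ)] y := by
  rw [psiF, dif_pos (dI f hf y j).2]
  congr 2
  rw [show (⟨(dI f hf y j).1, (dI f hf y j).2⟩ : {x // x ∈ V f hf y}) = dI f hf y j from rfl]
  rw [OrderIso.symm_apply_apply]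

lemma psiF_mapsto {x : Fin n} (hx : x ∈ V f hf y) : psiF f hf y x ∈ V f hf y := by
  rw [psiF, dif_pos hx]
  exact (mem_V f hf y).mpr ⟨_, by omega, rfl⟩

lemma psiF_iter_mapsto {x : Fin n} (hx : x ∈ V f hf y) (m : ℕ) :
    (psiF f hf y)^[m] x ∈ V f hf y := by
  induction m with
  | zero => exact hx
  | succ m ih => rw [Function.iterate_succ_apply']; exact psiF_mapsto f hf y ih

lemma psiF_bijOn : Set.BijOn (psiF f hf y) (V f hf y) (V f hf y) := by
  have hmaps : Set.MapsTo (psiF f hf y) (V f hf y) (V f hf y) := fun x hx =>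
    psiF_mapsto f hf y hx
  have hinj : Set.InjOn (psiF f hf y) (V f hf y) := by
    intro a ha b hb hab
    have ha' : a = (dI f hf y ((dI f hf y).symm ⟨a, ha⟩)).1 := by
      rw [OrderIso.apply_symm_apply]
    have hb' : b = (dI f hf y ((dI f hf y).symm ⟨b, hb⟩)).1 := by
      rw [OrderIso.apply_symm_apply]
    rw [ha', hb', psiF_d, psiF_d] at hab
    have := v_inj f hf y _ _ (by omega) (by omega) hab
    rw [ha', hb']
    exact congrArg (fun t => ((dI f hf y) t).1) (Fin.ext this)
  have hsurj : Set.SurjOn (psiF f hf y) (V f hf y) (V f hf y) := by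
    intro x hx
    obtain ⟨i, hi, rfl⟩ := (mem_V f hf y).mp hx
    exact ⟨(dI f hf y ⟨i, by omega⟩).1, (dI f hf y ⟨i, by omega⟩).2,
      psiF_d f hf y ⟨i, by omega⟩⟩
  exact ⟨hmaps, hinj, hsurj⟩

end Psi

/-- points of a finite invariant set under a bijection-on are periodic -/
lemma mem_periodicPts_of_bijOn {g : Fin n → Fin n} {s : Finset (Fin n)}
    (h : Set.BijOn g s s) {x : Fin n} (hx : x ∈ s) : x ∈ periodicPts g := by
  set e : {a // a ∈ s} → {a // a ∈ s} := fun a => ⟨g a.1, h.mapsTo a.2⟩ with he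
  have einj : Function.Injective e := by
    intro a b hab
    exact Subtype.ext (h.injOn a.2 b.2 (congrArg Subtype.val hab))
  have iter : ∀ k : ℕ, g^[k] x = (e^[k] ⟨x, hx⟩).1 := by
    intro k
    induction k with
    | zero => rfl
    | succ k ih => rw [Function.iterate_succ_apply', Function.iterate_succ_apply', ih]
  obtain ⟨i, j, hne, hij⟩ := Finite.exists_ne_map_eq_of_infinite (fun k : ℕ => e^[k] ⟨x, hx⟩)
  wlog hlt : i < j generalizing i j
  · exact this j i hne.symm hij.symm (by omega)
  have : e^[i] (e^[j-i] ⟨x, hx⟩) = e^[i] ⟨x, hx⟩ := by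
    rw [← Function.iterate_add_apply, show i + (j - i) = j by omega]
    exact hij.symm
  have hper : e^[j-i] ⟨x, hx⟩ = ⟨x, hx⟩ := einj.iterate i this
  refine Function.mk_mem_periodicPts (n := j - i) (by omega) ?_
  show g^[j-i] x = x
  rw [iter, hper]

section PsiInj
variable (f : Fin n → Fin n) (hf : P f) (y : Fin n)

lemma psiF_periodicPts (x : Fin n) :
    x ∈ periodicPts (psiF f hf y) ↔ x ∈ V f hf y := by
  constructor
  · rintro ⟨k, hk, hper⟩
    by_cases hc : ∃ j ≤ k, (psiF f hf y)^[j] x ∈ V f hf y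
    · obtain ⟨j, hj, hjV⟩ := hc
      have : (psiF f hf y)^[k - j] ((psiF f hf y)^[j] x) = x := by
        rw [← Function.iterate_add_apply, show k - j + j = k by omega]
        exact hper
      rw [← this]
      exact psiF_iter_mapsto f hf y hjV _
    · push_neg at hc
      have hiter : ∀ j ≤ k, (psiF f hf y)^[j] x = f^[j] x := by
        intro j hj
        induction j with
        | zero => rfl
        | succ j ih =>
          rw [Function.iterate_succ_apply', Function.iterate_succ_apply',
            ih (by omega), ← ih (by omega),
            psiF_not_mem f hf y (hc j (by omega))]
      have hxper : ∃ k' : ℕ, 1 ≤ k' ∧ f^[k'] x = x := by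
        refine ⟨k, hk, ?_⟩
        rw [← hiter k (le_refl k)]
        exact hper
      exact absurd ((rt'_unique f hf hxper) ▸ rt'_mem_V f hf y) (hc 0 (by omega))
  · intro hx
    exact mem_periodicPts_of_bijOn (psiF_bijOn f hf y) hx

end PsiInj

lemma orderIsoOfFin_val_congr {s s' : Finset (Fin n)} (h : s = s') {k k' : ℕ}
    (hk : s.card = k) (hk' : s'.card = k') (j : ℕ) (hj : j < k) (hj' : j < k') :
    ((s.orderIsoOfFin hk ⟨j, hj⟩) : Fin n) = (s'.orderIsoOfFin hk' ⟨j, hj'⟩ : Fin n) := by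
  subst h; subst hk; subst hk'; rfl

lemma dI_val_congr (f f' : Fin n → Fin n) (hf : P f) (hf' : P f') (y y' : Fin n)
    (hV : V f hf y = V f' hf' y') (j : ℕ) (hj : j < Nlen f hf y + 1)
    (hj' : j < Nlen f' hf' y' + 1) :
    (dI f hf y ⟨j, hj⟩).1 = (dI f' hf' y' ⟨j, hj'⟩).1 :=
  orderIsoOfFin_val_congr hV _ _ j hj hj'

lemma psi_inj_core (f f' : Fin n → Fin n) (hf : P f) (hf' : P f') (y y' : Fin n)
    (h : psiF f hf y = psiF f' hf' y') : f = f' ∧ y = y' := by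
  have hV : V f hf y = V f' hf' y' := by
    ext x
    rw [← psiF_periodicPts f hf y x, ← psiF_periodicPts f' hf' y' x, h]
  have hN : Nlen f hf y = Nlen f' hf' y' := by
    have h1 := V_card f hf y
    rw [hV, V_card f' hf' y'] at h1
    omega
  have cross : ∀ j ≤ Nlen f hf y, f^[j] y = f'^[j] y' := by
    intro j hj
    have h1 : f^[j] y = psiF f hf y (dI f hf y ⟨j, by omega⟩).1 :=
      (psiF_d f hf y ⟨j, by omega⟩).symm
    have h2 : f'^[j] y' = psiF f' hf' y' (dI f' hf' y' ⟨j, by omega⟩).1 :=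
      (psiF_d f' hf' y' ⟨j, by omega⟩).symm
    rw [h1, h2, h, dI_val_congr f f' hf hf' y y' hV j (by omega) (by omega)]
  have hy : y = y' := by simpa using cross 0 (by omega)
  refine ⟨?_, hy⟩
  funext x
  by_cases hx : x ∈ V f hf y
  · obtain ⟨i, hi, hix⟩ := (mem_V f hf y).mp hx
    have hx' : x ∈ V f' hf' y' := hV ▸ hx
    obtain ⟨i', hi', hix'⟩ := (mem_V f' hf' y').mp hx'
    have hii' : i = i' := by
      apply v_inj f hf y i i' hi (by omega)
      rw [hix, ← hix', cross i' (by omega)]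
    subst hii'
    rcases Nat.lt_or_ge i (Nlen f hf y) with hlt | hge
    · calc f x = f^[i+1] y := by
            rw [← hix, ← Function.iterate_succ_apply' f i y]
        _ = f'^[i+1] y' := cross (i+1) (by omega)
        _ = f' x := by rw [Function.iterate_succ_apply' f' i y', hix']
    · have hiN : i = Nlen f hf y := by omega
      subst hiN
      have h1 : f x = rt' f hf := by
        rw [← hix, Nlen_spec f hf y]
        exact rt'_fixed f hf
      have h2 : f' x = rt' f' hf' := by
        rw [← hix', hN, Nlen_spec f' hf' y']
        exact rt'_fixed f' hf'
      rw [h1, h2, ← Nlen_spec f hf y, ← Nlen_spec f' hf' y', ← hN]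
      exact cross _ (le_refl _)
  · have hx' : x ∉ V f' hf' y' := hV ▸ hx
    rw [← psiF_not_mem f hf y hx, ← psiF_not_mem f' hf' y' hx', h]


end Stmt0

open Stmt0 in
/-- The number of functions `f : Fin n → Fin n` with exactly one cyclic point
(a point `x` with `f^[k] x = x` for some `k ≥ 1`) equals `n^(n-1)`, for `n ≥ 1`. -/
theorem stmt_0 (n : ℕ) (hn : 1 ≤ n) :
    Nat.card {f : Fin n → Fin n // ∃! x : Fin n, ∃ k : ℕ, 1 ≤ k ∧ f^[k] x = x} =
      n ^ (n - 1) := by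
  classical
  show Nat.card {f : Fin n → Fin n // P f} = n ^ (n - 1)
  have hK : ∀ g : Fin n → Fin n, 0 < (C g).card :=
    fun g => Finset.card_pos.mpr (C_nonempty hn g)
  have hΦ : Function.Injective (fun g : Fin n → Fin n =>
      ((⟨phiF g, phiF_P g (hK g)⟩ : {f : Fin n → Fin n // P f}), yg g (hK g))) := by
    intro g g' hgg'
    simp only [Prod.mk.injEq, Subtype.mk.injEq] at hgg'
    exact phi_inj_core g g' (hK g) (hK g') (congrArg Subtype.val hgg'.1) hgg'.2
  have hΨ : Function.Injective
      (fun p : {f : Fin n → Fin n // P f} × Fin n => psiF p.1.1 p.1.2 p.2) := by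
    intro p q hpq
    obtain ⟨hff, hyy⟩ := psi_inj_core p.1.1 q.1.1 p.1.2 q.1.2 p.2 q.2 hpq
    exact Prod.ext (Subtype.ext hff) hyy
  have h1 : Nat.card (Fin n → Fin n) ≤ Nat.card ({f : Fin n → Fin n // P f} × Fin n) :=
    Nat.card_le_card_of_injective _ hΦ
  have h2 : Nat.card ({f : Fin n → Fin n // P f} × Fin n) ≤ Nat.card (Fin n → Fin n) :=
    Nat.card_le_card_of_injective _ hΨ
  have heq : Nat.card ({f : Fin n → Fin n // P f} × Fin n) = Nat.card (Fin n → Fin n) :=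
    le_antisymm h2 h1
  rw [Nat.card_prod, Nat.card_fun] at heq
  simp only [Nat.card_eq_fintype_card, Fintype.card_fin] at heq ⊢
  have hpow : n ^ n = n ^ (n - 1) * n := by
    rw [← pow_succ]
    congr 1
    omega
  rw [hpow] at heq
  exact Nat.eq_of_mul_eq_mul_right (show 0 < n by omega) heq
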